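/- Let μ and ν be Borel probability measures on ℝ^d such that μ ⪯_MCH ν (in particular, if ν is obtained from μ by a single elementary operation). If X_1,…,X_B are i.i.d. with law μ and Y_1,…,Y_B are i.i.d. with law ν, then P(0 ∉ ∏_{j=1}^d [min_{1≤i≤B} (X_i)_j, max_{1≤i≤B} (X_i)_j]) ≤ P(0 ∉ ∏_{j=1}^d [min_{1≤i≤B} (Y_i)_j, max_{1≤i≤B} (Y_i)_j]). -/

import Mathlib

open MeasureTheory ProbabilityTheory

/-- Coordinatewise sign vector of `x ∈ ℝ^d`, valued in `{−1,0,1}^d`. -/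
noncomputable def signVec {d : ℕ} (x : Fin d → ℝ) : Fin d → SignType :=
  fun j => SignType.sign (x j)

/-- The mass that `μ` gives to the set of points with sign pattern `η`. -/
noncomputable def sgnMass {d : ℕ} (μ : Measure (Fin d → ℝ)) (η : Fin d → SignType) : ℝ :=
  (μ {x | signVec x = η}).toReal

/-- `ν` is obtained from `μ` by an elementary operation: a mass `q` is moved from the sign
pattern `η ∈ U_d \ V_d` to a sign pattern `η′` with `η ⪯_s η′`. -/
def ElemOp {d : ℕ} (μ ν : Measure (Fin d → ℝ)) : Prop :=
  ∃ (q : ℝ) (η η' : Fin d → SignType),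
    0 ≤ q ∧ (∃ j, η j = 0) ∧ (∀ j, η j ≠ 0 → η' j = η j) ∧
    (∀ γ, γ ≠ η → γ ≠ η' → sgnMass ν γ = sgnMass μ γ) ∧
    q ≤ sgnMass μ η ∧
    sgnMass ν η = sgnMass μ η - q ∧
    sgnMass ν η' = sgnMass μ η' + q

/-- `μ ⪯_MCH ν` : `ν` is obtained from `μ` by a finite sequence of elementary operations. -/
def MCHle {d : ℕ} (μ ν : Measure (Fin d → ℝ)) : Prop :=
  Relation.ReflTransGen ElemOp μ ν

/-- A measure on `ℝ^d` is MCH if it puts no mass on the coordinate hyperplanes. -/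
def IsMCH {d : ℕ} (ν : Measure (Fin d → ℝ)) : Prop :=
  ν {x | ∃ j, x j = 0} = 0

/-- The element of `V_d = {−1,1}^d` associated with `b : Fin d → Bool`. -/
def orthSign {d : ℕ} (b : Fin d → Bool) : Fin d → SignType :=
  fun j => if b j then 1 else -1

/-- The general orthant median bias `OMB(μ)`. -/
noncomputable def OMB {d : ℕ} (μ : Measure (Fin d → ℝ)) : ℝ :=
  sInf {r | ∃ ν : Measure (Fin d → ℝ), IsProbabilityMeasure ν ∧ IsMCH ν ∧ MCHle μ ν ∧
    r = 2 ^ (d - 1) * max 0 (1 / 2 ^ d - ⨅ b : Fin d → Bool, sgnMass ν (orthSign b))}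


instance : MeasurableSpace SignType := ⊤
instance : MeasurableSingletonClass SignType := ⟨fun _ => MeasurableSpace.measurableSet_top⟩

lemma measurable_sign_real : Measurable (SignType.sign : ℝ → SignType) := by
  apply measurable_to_countable'
  intro y
  cases y with
  | zero =>
    have h : (SignType.sign : ℝ → SignType) ⁻¹' {(0 : SignType)} = {(0:ℝ)} := by
      ext x; simp [sign_eq_zero_iff]
    exact h ▸ measurableSet_singleton 0
  | pos =>
    have h : (SignType.sign : ℝ → SignType) ⁻¹' {(1 : SignType)} = Set.Ioi 0 := by
      ext x; simp [sign_eq_one_iff]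
    exact h ▸ measurableSet_Ioi
  | neg =>
    have h : (SignType.sign : ℝ → SignType) ⁻¹' {(-1 : SignType)} = Set.Iio 0 := by
      ext x; simp [sign_eq_neg_one_iff]
    exact h ▸ measurableSet_Iio


lemma measurable_signVec {d : ℕ} : Measurable (signVec (d := d)) :=
  measurable_pi_lambda _ fun j => measurable_sign_real.comp (measurable_pi_apply j)

open Classical in
noncomputable def hullA (d B : ℕ) : Finset (Fin B → Fin d → SignType) :=
  Finset.univ.filter (fun a => ∃ j, (∀ i, a i j = 1) ∨ (∀ i, a i j = -1))

noncomputable def realF {d : ℕ} (B : ℕ) (p : (Fin d → SignType) → ℝ) : ℝ :=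
  ∑ a ∈ hullA d B, ∏ i, p (a i)

lemma expand_aux {d B : ℕ} (q : ℝ) (r : (Fin d → SignType) → ℝ) (θ : Fin d → SignType) :
    ∑ a ∈ hullA d B, ∏ i, ((if a i = θ then q else 0) + r (a i))
      = ∑ t ∈ (Finset.univ : Finset (Fin B)).powerset,
          ∑ a ∈ hullA d B,
            (∏ i ∈ t, (if a i = θ then q else 0)) * ∏ i ∈ Finset.univ \ t, r (a i) := by
  classical
  simp_rw [Finset.prod_add]
  exact Finset.sum_comm

lemma sum_term_mono {d B : ℕ} {q : ℝ} (hq : 0 ≤ q) {r : (Fin d → SignType) → ℝ}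
    (hr : ∀ γ, 0 ≤ r γ) {η η' : Fin d → SignType} (hs : ∀ j, η j ≠ 0 → η' j = η j)
    (t : Finset (Fin B)) :
    ∑ a ∈ hullA d B, (∏ i ∈ t, (if a i = η then q else 0)) * ∏ i ∈ Finset.univ \ t, r (a i)
      ≤ ∑ a ∈ hullA d B, (∏ i ∈ t, (if a i = η' then q else 0)) * ∏ i ∈ Finset.univ \ t, r (a i) := by
  classical
  set φ : (Fin B → Fin d → SignType) → (Fin B → Fin d → SignType) :=
    fun a i => if i ∈ t then η' else a i with hφ
  set L := (hullA d B).filter (fun a => ∀ i ∈ t, a i = η) with hLdef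
  have hterm0 : ∀ a ∈ hullA d B, a ∉ L →
      (∏ i ∈ t, (if a i = η then q else 0)) * ∏ i ∈ Finset.univ \ t, r (a i) = 0 := by
    intro a ha haL
    have hne : ¬ ∀ i ∈ t, a i = η := fun h => haL (Finset.mem_filter.mpr ⟨ha, h⟩)
    push_neg at hne
    obtain ⟨i, hi, hnei⟩ := hne
    rw [Finset.prod_eq_zero hi (show (if a i = η then q else 0) = 0 from if_neg hnei), zero_mul]
  rw [← Finset.sum_subset (Finset.filter_subset _ _) hterm0]
  have hinj : ∀ a ∈ L, ∀ b ∈ L, φ a = φ b → a = b := by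
    intro a ha b hb hab
    funext i
    by_cases hi : i ∈ t
    · rw [(Finset.mem_filter.mp ha).2 i hi, (Finset.mem_filter.mp hb).2 i hi]
    · have := congrFun hab i
      simpa [hφ, hi] using this
  have himg : L.image φ ⊆ hullA d B := by
    intro b hb
    obtain ⟨a, ha, rfl⟩ := Finset.mem_image.mp hb
    have haA := (Finset.mem_filter.mp ha).1
    have haη := (Finset.mem_filter.mp ha).2
    obtain ⟨j, hj⟩ := (Finset.mem_filter.mp haA).2
    refine Finset.mem_filter.mpr ⟨Finset.mem_univ _, j, ?_⟩
    rcases hj with hpos | hneg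
    · left; intro i
      by_cases hi : i ∈ t
      · have h1 : η j = 1 := by rw [← haη i hi]; exact hpos i
        simp [hφ, hi, hs j (by rw [h1]; decide), h1]
      · simpa [hφ, hi] using hpos i
    · right; intro i
      by_cases hi : i ∈ t
      · have h1 : η j = -1 := by rw [← haη i hi]; exact hneg i
        simp [hφ, hi, hs j (by rw [h1]; decide), h1]
      · simpa [hφ, hi] using hneg i
  calc ∑ a ∈ L, (∏ i ∈ t, (if a i = η then q else 0)) * ∏ i ∈ Finset.univ \ t, r (a i)
      = ∑ a ∈ L, (∏ i ∈ t, (if φ a i = η' then q else 0)) * ∏ i ∈ Finset.univ \ t, r (φ a i) := by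
        refine Finset.sum_congr rfl fun a ha => ?_
        have haη := (Finset.mem_filter.mp ha).2
        congr 1
        · refine Finset.prod_congr rfl fun i hi => ?_
          rw [if_pos (haη i hi), if_pos (by simp [hφ, hi])]
        · refine Finset.prod_congr rfl fun i hi => ?_
          have hni : i ∉ t := (Finset.mem_sdiff.mp hi).2
          simp [hφ, hni]
    _ = ∑ b ∈ L.image φ,
          (∏ i ∈ t, (if b i = η' then q else 0)) * ∏ i ∈ Finset.univ \ t, r (b i) :=
        (Finset.sum_image (f := fun (b : Fin B → Fin d → SignType) => (∏ i ∈ t, if b i = η' then q else 0) * ∏ i ∈ Finset.univ \ t, r (b i)) (g := φ) hinj).symm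
    _ ≤ ∑ a ∈ hullA d B,
          (∏ i ∈ t, (if a i = η' then q else 0)) * ∏ i ∈ Finset.univ \ t, r (a i) := by
        refine Finset.sum_le_sum_of_subset_of_nonneg himg fun a _ _ => ?_
        refine mul_nonneg (Finset.prod_nonneg fun i _ => ?_) (Finset.prod_nonneg fun i _ => hr _)
        split_ifs
        · exact hq
        · exact le_rfl

lemma realF_mono_elem {d B : ℕ} {p p' : (Fin d → SignType) → ℝ}
    (hp : ∀ γ, 0 ≤ p γ) (q : ℝ) (η η' : Fin d → SignType) (hq : 0 ≤ q)
    (hs : ∀ j, η j ≠ 0 → η' j = η j)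
    (hoff : ∀ γ, γ ≠ η → γ ≠ η' → p' γ = p γ)
    (hqle : q ≤ p η) (h1 : p' η = p η - q) (h2 : p' η' = p η' + q) :
    realF B p ≤ realF B p' := by
  classical
  by_cases hee : η = η'
  · have hpp : p' = p := by
      funext γ
      by_cases hγ : γ = η
      · subst hγ
        rw [← hee] at h2
        linarith
      · exact hoff γ hγ (fun h => hγ (h.trans hee.symm))
    rw [hpp]
  · set r : (Fin d → SignType) → ℝ := fun γ => if γ = η then p η - q else p γ with hrdef
    have hr : ∀ γ, 0 ≤ r γ := by
      intro γ
      simp only [hrdef]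
      split_ifs
      · linarith
      · exact hp γ
    have hpeq : ∀ γ, p γ = (if γ = η then q else 0) + r γ := by
      intro γ
      simp only [hrdef]
      split_ifs with h
      · rw [h]; ring
      · ring
    have hp'eq : ∀ γ, p' γ = (if γ = η' then q else 0) + r γ := by
      intro γ
      simp only [hrdef]
      by_cases h' : γ = η'
      · subst h'
        rw [if_pos rfl, if_neg (fun h => hee h.symm), h2]; ring
      · rw [if_neg h']
        by_cases h : γ = η
        · subst h; rw [if_pos rfl, h1]; ring
        · rw [if_neg h, hoff γ h h', zero_add]
    calc realF B p
        = ∑ t ∈ (Finset.univ : Finset (Fin B)).powerset,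
            ∑ a ∈ hullA d B,
              (∏ i ∈ t, (if a i = η then q else 0)) * ∏ i ∈ Finset.univ \ t, r (a i) := by
          rw [← expand_aux]
          exact Finset.sum_congr rfl fun a _ => Finset.prod_congr rfl fun i _ => hpeq (a i)
      _ ≤ ∑ t ∈ (Finset.univ : Finset (Fin B)).powerset,
            ∑ a ∈ hullA d B,
              (∏ i ∈ t, (if a i = η' then q else 0)) * ∏ i ∈ Finset.univ \ t, r (a i) :=
          Finset.sum_le_sum fun t _ => sum_term_mono hq hr hs t
      _ = realF B p' := by
          rw [← expand_aux]
          exact Finset.sum_congr rfl fun a _ =>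
            Finset.prod_congr rfl fun i _ => (hp'eq (a i)).symm

lemma prob_eq_realF {d B : ℕ} (μ : Measure (Fin d → ℝ)) [IsProbabilityMeasure μ]
    {Ω : Type*} [MeasurableSpace Ω] (P : Measure Ω) [IsProbabilityMeasure P]
    (X : Fin B → Ω → Fin d → ℝ) (hXmeas : ∀ i, Measurable (X i))
    (hXindep : iIndepFun X P)
    (hXlaw : ∀ i, Measure.map (X i) P = μ) :
    (P {ω | ∃ j, (∀ i, 0 < X i ω j) ∨ (∀ i, X i ω j < 0)}).toReal
      = realF B (sgnMass μ) := by
  classical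
  have hsgn : Measurable (signVec (d := d)) := measurable_signVec
  set W : Fin B → Ω → (Fin d → SignType) := fun i => signVec ∘ X i with hW
  have hWmeas : ∀ i, Measurable (W i) := fun i => hsgn.comp (hXmeas i)
  have hWindep : iIndepFun W P :=
    hXindep.comp (fun _ => signVec) (fun _ => hsgn)
  have hset : {ω | ∃ j, (∀ i, 0 < X i ω j) ∨ (∀ i, X i ω j < 0)}
      = ⋃ a ∈ hullA d B, ⋂ i ∈ (Finset.univ : Finset (Fin B)), W i ⁻¹' {a i} := by
    ext ω
    simp only [Set.mem_setOf_eq, Set.mem_iUnion, Set.mem_iInter, Set.mem_preimage,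
      Set.mem_singleton_iff, Finset.mem_univ, forall_true_left, exists_prop]
    constructor
    · rintro ⟨j, hj⟩
      refine ⟨fun i => W i ω, ?_, fun i => rfl⟩
      refine Finset.mem_filter.mpr ⟨Finset.mem_univ _, j, ?_⟩
      rcases hj with h | h
      · exact Or.inl fun i => sign_eq_one_iff.mpr (h i)
      · exact Or.inr fun i => sign_eq_neg_one_iff.mpr (h i)
    · rintro ⟨a, ha, hmem⟩
      obtain ⟨j, hj⟩ := (Finset.mem_filter.mp ha).2
      rcases hj with h | h
      · refine ⟨j, Or.inl fun i => sign_eq_one_iff.mp ?_⟩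
        have hWa : SignType.sign (X i ω j) = a i j := congrFun (hmem i) j
        rw [hWa]; exact h i
      · refine ⟨j, Or.inr fun i => sign_eq_neg_one_iff.mp ?_⟩
        have hWa : SignType.sign (X i ω j) = a i j := congrFun (hmem i) j
        rw [hWa]; exact h i
  have hdisj : (↑(hullA d B) : Set (Fin B → Fin d → SignType)).PairwiseDisjoint
      (fun a => ⋂ i ∈ (Finset.univ : Finset (Fin B)), W i ⁻¹' {a i}) := by
    intro a _ b _ hab
    refine Set.disjoint_left.mpr fun ω hωa hωb => hab ?_
    simp only [Set.mem_iInter, Set.mem_preimage, Set.mem_singleton_iff,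
      Finset.mem_univ, forall_true_left] at hωa hωb
    funext i
    rw [← hωa i, ← hωb i]
  have hmeas : ∀ a ∈ hullA d B,
      MeasurableSet (⋂ i ∈ (Finset.univ : Finset (Fin B)), W i ⁻¹' {a i}) := by
    intro a _
    exact Set.Finite.measurableSet_biInter (Set.finite_univ.subset (Set.subset_univ _))
      (fun i _ => hWmeas i (measurableSet_singleton _))
  rw [hset, measure_biUnion_finset hdisj hmeas]
  have hterm : ∀ a : Fin B → Fin d → SignType,
      P (⋂ i ∈ (Finset.univ : Finset (Fin B)), W i ⁻¹' {a i})
        = ∏ i, μ {x | signVec x = a i} := by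
    intro a
    rw [hWindep.measure_inter_preimage_eq_mul Finset.univ
      (sets := fun i => {a i}) (fun i _ => measurableSet_singleton _)]
    refine Finset.prod_congr rfl fun i _ => ?_
    have h1 : W i ⁻¹' {a i} = X i ⁻¹' (signVec ⁻¹' {a i}) := rfl
    rw [h1, ← Measure.map_apply (hXmeas i) (hsgn (measurableSet_singleton _)), hXlaw i]
    rfl
  rw [Finset.sum_congr rfl fun a _ => hterm a]
  rw [ENNReal.toReal_sum (fun a _ => ENNReal.prod_ne_top fun i _ => measure_ne_top μ _)]
  refine Finset.sum_congr rfl fun a _ => ?_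
  rw [ENNReal.toReal_prod]
  rfl

lemma MCHle_mono_realF {d B : ℕ} {μ ν : Measure (Fin d → ℝ)} (h : MCHle μ ν) :
    realF B (sgnMass μ) ≤ realF B (sgnMass ν) := by
  induction h with
  | refl => exact le_rfl
  | tail hsteps hstep ih =>
    obtain ⟨q, η, η', hq, -, hs, hoff, hqle, h1, h2⟩ := hstep
    exact ih.trans
      (realF_mono_elem (fun γ => ENNReal.toReal_nonneg) q η η' hq hs hoff hqle h1 h2)

/-- if `μ ⪯_MCH ν`, then the probability that the rectangular hull of `B`
i.i.d. draws from `μ` misses the origin is at most the corresponding probability for `ν`. -/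
theorem rectHull_miscoverage_mono_of_MCHle
    {d B : ℕ} (hd : 1 ≤ d) (hB : 1 ≤ B)
    (μ ν : Measure (Fin d → ℝ)) [IsProbabilityMeasure μ] [IsProbabilityMeasure ν]
    (hle : MCHle μ ν)
    {Ω₁ : Type*} [MeasurableSpace Ω₁] (P₁ : Measure Ω₁) [IsProbabilityMeasure P₁]
    {Ω₂ : Type*} [MeasurableSpace Ω₂] (P₂ : Measure Ω₂) [IsProbabilityMeasure P₂]
    (X : Fin B → Ω₁ → Fin d → ℝ) (Y : Fin B → Ω₂ → Fin d → ℝ)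
    (hXmeas : ∀ i, Measurable (X i)) (hYmeas : ∀ i, Measurable (Y i))
    (hXindep : iIndepFun X P₁)
    (hYindep : iIndepFun Y P₂)
    (hXlaw : ∀ i, Measure.map (X i) P₁ = μ)
    (hYlaw : ∀ i, Measure.map (Y i) P₂ = ν) :
    (P₁ {ω | ∃ j, (∀ i, 0 < X i ω j) ∨ (∀ i, X i ω j < 0)}).toReal
      ≤ (P₂ {ω | ∃ j, (∀ i, 0 < Y i ω j) ∨ (∀ i, Y i ω j < 0)}).toReal := by
  rw [prob_eq_realF μ P₁ X hXmeas hXindep hXlaw, prob_eq_realF ν P₂ Y hYmeas hYindep hYlaw]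
  exact MCHle_mono_realF hle
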